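/- Let n ≥ 1 and let x_1 < x_2 < ... < x_{2n} be distinct real numbers (points on a line). With R_i := ∏_{j ≠ i} |x_i - x_j|, the sum of 1/R_i over even indices equals the sum of 1/R_i over odd indices. -/

import Mathlib

open Finset Polynomial

lemma leadingCoeff_basisDivisor (x y : ℝ) :
    (Lagrange.basisDivisor x y).leadingCoeff = (x - y)⁻¹ := by
  rw [Lagrange.basisDivisor, leadingCoeff_mul, leadingCoeff_C,
    (monic_X_sub_C y).leadingCoeff, mul_one]

lemma key_sum (m : ℕ) (hm : 2 ≤ m) (v : Fin m → ℝ) (hv : Function.Injective v) :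
    ∑ i, (∏ j ∈ Finset.univ.erase i, (v i - v j))⁻¹ = 0 := by
  have hne : (Finset.univ : Finset (Fin m)).Nonempty := ⟨⟨0, by omega⟩, mem_univ _⟩
  have h := Lagrange.sum_basis (s := Finset.univ) hv.injOn hne
  have h2 := congrArg (fun p => Polynomial.coeff p (m - 1)) h
  simp only [Polynomial.finset_sum_coeff, Polynomial.coeff_one] at h2
  rw [if_neg (by omega : ¬ (m - 1 = 0))] at h2
  rw [← h2]
  refine Finset.sum_congr rfl fun i _ => ?_
  have hd : (Lagrange.basis Finset.univ v i).natDegree = m - 1 := by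
    rw [Lagrange.natDegree_basis hv.injOn (mem_univ i), Finset.card_univ, Fintype.card_fin]
  rw [← hd, Polynomial.coeff_natDegree, Lagrange.basis, Polynomial.leadingCoeff_prod,
    ← Finset.prod_inv_distrib]
  exact (Finset.prod_congr rfl fun j _ => (leadingCoeff_basisDivisor _ _)).symm

theorem mcdougall_line (n : ℕ) (hn : 1 ≤ n) (x : Fin (2 * n) → ℝ)
    (hx : StrictMono x) (R : Fin (2 * n) → ℝ)
    (hR : ∀ i, R i = ∏ j ∈ Finset.univ.erase i, |x i - x j|) :
    ∑ i ∈ Finset.univ.filter (fun i : Fin (2 * n) => (i : ℕ) % 2 = 0), 1 / R i =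
      ∑ i ∈ Finset.univ.filter (fun i : Fin (2 * n) => (i : ℕ) % 2 = 1), 1 / R i := by
  have hR0 : ∀ i, 0 < R i := by
    intro i; rw [hR i]
    refine Finset.prod_pos fun j hj => ?_
    rw [abs_pos, sub_ne_zero]
    exact fun h => (Finset.mem_erase.mp hj).1 (hx.injective h).symm
  have hsign : ∀ i : Fin (2 * n),
      ∏ j ∈ Finset.univ.erase i, (x i - x j) = (-1) ^ (2 * n - 1 - (i : ℕ)) * R i := by
    intro i
    rw [hR i]
    have hcongr : ∀ j ∈ Finset.univ.erase i,
        x i - x j = (if (j : ℕ) < (i : ℕ) then (1 : ℝ) else -1) * |x i - x j| := by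
      intro j hj
      have hji : j ≠ i := (Finset.mem_erase.mp hj).1
      by_cases h : (j : ℕ) < (i : ℕ)
      · rw [if_pos h, one_mul, abs_of_pos (sub_pos.mpr (hx h))]
      · have hij : (i : ℕ) < (j : ℕ) := by
          have := Fin.val_ne_of_ne hji; omega
        rw [if_neg h, neg_one_mul, abs_of_neg (sub_neg.mpr (hx hij)), neg_neg]
    rw [Finset.prod_congr rfl hcongr, Finset.prod_mul_distrib]
    congr 1
    rw [Finset.prod_ite, Finset.prod_const_one, Finset.prod_const, one_mul]
    congr 1
    have hfe : (Finset.univ.erase i).filter (fun j : Fin (2 * n) => ¬ (j : ℕ) < (i : ℕ)) = Finset.Ioi i := by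
      ext j
      simp only [Finset.mem_filter, Finset.mem_erase, Finset.mem_univ, and_true, true_and,
        Finset.mem_Ioi, Fin.lt_def, not_lt, Fin.ext_iff]
      constructor
      · rintro ⟨h1, h2⟩; omega
      · intro h; omega
    rw [hfe, Fin.card_Ioi]
  have key := key_sum (2 * n) (by omega) x hx.injective
  have hterm : ∀ i : Fin (2 * n),
      (∏ j ∈ Finset.univ.erase i, (x i - x j))⁻¹ = (-1) ^ (2 * n - 1 - (i : ℕ)) * (1 / R i) := by
    intro i
    rw [hsign i, mul_inv, ← inv_pow, inv_neg, inv_one, one_div]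
  rw [Finset.sum_congr rfl fun i _ => hterm i] at key
  rw [← Finset.sum_filter_add_sum_filter_not Finset.univ
    (fun i : Fin (2 * n) => (i : ℕ) % 2 = 0)] at key
  have he : ∀ i ∈ Finset.univ.filter (fun i : Fin (2 * n) => (i : ℕ) % 2 = 0),
      (-1 : ℝ) ^ (2 * n - 1 - (i : ℕ)) * (1 / R i) = -(1 / R i) := by
    intro i hi
    simp only [Finset.mem_filter] at hi
    have : Odd (2 * n - 1 - (i : ℕ)) := by
      rw [Nat.odd_iff]; have := i.isLt; omega
    rw [this.neg_one_pow, neg_one_mul]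
  have ho : ∀ i ∈ Finset.univ.filter (fun i : Fin (2 * n) => ¬ (i : ℕ) % 2 = 0),
      (-1 : ℝ) ^ (2 * n - 1 - (i : ℕ)) * (1 / R i) = 1 / R i := by
    intro i hi
    simp only [Finset.mem_filter] at hi
    have : Even (2 * n - 1 - (i : ℕ)) := by
      rw [Nat.even_iff]; have := i.isLt; omega
    rw [this.neg_one_pow, one_mul]
  rw [Finset.sum_congr rfl he, Finset.sum_congr rfl ho, Finset.sum_neg_distrib] at key
  have hfilter : Finset.univ.filter (fun i : Fin (2 * n) => ¬ (i : ℕ) % 2 = 0) =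
      Finset.univ.filter (fun i : Fin (2 * n) => (i : ℕ) % 2 = 1) := by
    apply Finset.filter_congr; intro i _; omega
  rw [hfilter] at key
  linarith
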